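/- Existence of equilibrium with client funding commitments: fix a ∈ [0, r_b] and b ∈ [0, r_b], and let the feasible sets be R_mm := [a, r_b] and R_rm := [0, b]. Then there exists a pair (x, y) ∈ R_mm × R_rm such that π_mm(x', y) ≤ π_mm(x, y) for all x' ∈ R_mm and π_rm(x, y') ≤ π_rm(x, y) for all y' ∈ R_rm; that is, a Nash equilibrium in client repo rates exists when one or both broker-dealers is subject to a funding commitment. -/

import Mathlib

open Set

/-- Interdealer trade quantity `Q(x,y) = min (D x) (S y)`. -/
noncomputable def interQ (D S : ℝ → ℝ) (x y : ℝ) : ℝ := min (D x) (S y)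

/-- Payoff of `BD_mm`. -/
noncomputable def piMM (D S : ℝ → ℝ) (x y : ℝ) : ℝ :=
  (1 / 2) * max (y - x) 0 * interQ D S x y - max (D x - interQ D S x y) 0 * x

/-- Payoff of `BD_rm`. -/
noncomputable def piRM (D S : ℝ → ℝ) (x y : ℝ) : ℝ :=
  (1 / 2) * max (y - x) 0 * interQ D S x y - max (S y - interQ D S x y) 0 * y

/-- mm dominance: when `S y ≤ D a`, any `x ≥ a` is weakly worse than `a` for mm. -/
lemma aux_L1 {D S : ℝ → ℝ} {a x y : ℝ} (ha : 0 ≤ a) (hax : a ≤ x)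
    (h1 : S y ≤ D a) (h2 : D a ≤ D x) (h3 : 0 ≤ S y) :
    piMM D S x y ≤ piMM D S a y := by
  unfold piMM interQ
  rw [min_eq_right (h1.trans h2), min_eq_right h1,
    max_eq_left (by linarith : (0:ℝ) ≤ D x - S y),
    max_eq_left (by linarith : (0:ℝ) ≤ D a - S y)]
  have m1 : max (y - x) 0 ≤ max (y - a) 0 := max_le_max (by linarith) le_rfl
  have m2 : (D a - S y) * a ≤ (D x - S y) * x :=
    mul_le_mul (by linarith) hax ha (by linarith)
  nlinarith [mul_le_mul_of_nonneg_right m1 h3]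

/-- rm gets a nonpositive payoff from any quote weakly below mm's quote. -/
lemma aux_L2 {D S : ℝ → ℝ} {x y : ℝ} (h : y ≤ x) (hy : 0 ≤ y) :
    piRM D S x y ≤ 0 := by
  unfold piRM interQ
  rw [max_eq_right (by linarith : y - x ≤ 0)]
  have : 0 ≤ max (S y - min (D x) (S y)) 0 * y := mul_nonneg (le_max_right _ _) hy
  linarith

/-- rm's payoff from quoting `0` is zero. -/
lemma aux_L3 {D S : ℝ → ℝ} {x : ℝ} (hx : 0 ≤ x) : piRM D S x 0 = 0 := by
  unfold piRM interQ
  rw [max_eq_right (by linarith : (0:ℝ) - x ≤ 0)]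
  ring

/-- mm's payoff against an rm quote of `0` is nonpositive. -/
lemma aux_L4 {D S : ℝ → ℝ} {x : ℝ} (hx : 0 ≤ x) : piMM D S x 0 ≤ 0 := by
  unfold piMM interQ
  rw [max_eq_right (by linarith : (0:ℝ) - x ≤ 0)]
  have : 0 ≤ max (D x - min (D x) (S 0)) 0 * x := mul_nonneg (le_max_right _ _) hx
  linarith

/-- Max bound on an interval for an affine function minus `S y * y`,
from concavity and antitonicity of `S`. -/
lemma aux_L7 {S : ℝ → ℝ} {rb p q y c₁ c₀ : ℝ}
    (hconc : ConcaveOn ℝ (Icc 0 rb) S)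
    (hanti : ∀ ⦃u⦄, u ∈ Icc (0:ℝ) rb → ∀ ⦃v⦄, v ∈ Icc (0:ℝ) rb → u ≤ v → S v ≤ S u)
    (hp : p ∈ Icc (0:ℝ) rb) (hq : q ∈ Icc (0:ℝ) rb) (hpq : p ≤ q)
    (hy : y ∈ Icc p q) :
    c₁ * y + c₀ - S y * y ≤
      max (c₁ * p + c₀ - S p * p) (c₁ * q + c₀ - S q * q) := by
  rcases eq_or_lt_of_le hpq with rfl | hlt
  · have hyp : y = p := le_antisymm hy.2 hy.1
    subst hyp
    exact le_max_left _ _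
  · set t := (y - p) / (q - p) with ht
    have hqp : 0 < q - p := by linarith
    have ht0 : 0 ≤ t := div_nonneg (by linarith [hy.1]) hqp.le
    have ht1 : t ≤ 1 := by
      rw [div_le_one hqp]; linarith [hy.2]
    have hyt : y = (1 - t) * p + t * q := by
      field_simp [ht]
      have htq : t * (q - p) = y - p := by rw [ht]; exact div_mul_cancel₀ _ hqp.ne'
      linarith
    have hcc := hconc.2 hp hq (by linarith : (0:ℝ) ≤ 1 - t) ht0 (by ring)
    rw [smul_eq_mul, smul_eq_mul, smul_eq_mul, smul_eq_mul, ← hyt] at hcc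
    have hSqp : S q ≤ S p := hanti hp hq hpq
    have hy0 : 0 ≤ y := le_trans hp.1 hy.1
    have h1 : ((1 - t) * S p + t * S q) * y ≤ S y * y :=
      mul_le_mul_of_nonneg_right hcc hy0
    have hprod : 0 ≤ (1 - t) * t * ((S p - S q) * (q - p)) :=
      mul_nonneg (mul_nonneg (by linarith) ht0)
        (mul_nonneg (by linarith) (by linarith))
    have h2 : (1 - t) * (S p * p) + t * (S q * q) ≤ ((1 - t) * S p + t * S q) * y := by
      rw [hyt]; nlinarith [hprod]
    have hA := le_max_left (c₁ * p + c₀ - S p * p) (c₁ * q + c₀ - S q * q)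
    have hB := le_max_right (c₁ * p + c₀ - S p * p) (c₁ * q + c₀ - S q * q)
    have h3 := mul_le_mul_of_nonneg_left hA (by linarith : (0:ℝ) ≤ 1 - t)
    have h4 := mul_le_mul_of_nonneg_left hB ht0
    have haff : c₁ * y + c₀ = (1 - t) * (c₁ * p + c₀) + t * (c₁ * q + c₀) := by
      rw [hyt]; ring
    nlinarith [h1, h2, h3, h4]

/-- Existence of equilibrium with client funding commitments: with feasible sets
`R_mm = [a, r_b]` and `R_rm = [0, b]`, a Nash equilibrium in client repo rates
exists. -/
theorem funding_commitment_equilibrium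
    (rhat rb Tmax : ℝ) (D S : ℝ → ℝ)
    (hrhat : 0 < rhat) (hrb : rhat < rb) (hTmax : 0 < Tmax)
    (hDc : ContinuousOn D (Icc 0 rb)) (hDm : StrictMonoOn D (Icc 0 rb))
    (hD0 : D 0 = 0) (hDr : D rhat = Tmax)
    (hSc : ContinuousOn S (Icc 0 rb)) (hSa : StrictAntiOn S (Icc 0 rb))
    (hSb : S rb = 0) (hSr : S rhat = Tmax)
    (U : Set ℝ) (hUo : IsOpen U) (hU : Icc (0:ℝ) rb ⊆ U)
    (hD2 : ContDiffOn ℝ 2 D U) (hS2 : ContDiffOn ℝ 2 S U)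
    (hD' : ∀ x ∈ Icc (0:ℝ) rb, 0 < deriv D x)
    (hD'' : ∀ x ∈ Icc (0:ℝ) rb, deriv (deriv D) x < 0)
    (hS' : ∀ x ∈ Icc (0:ℝ) rb, deriv S x < 0)
    (hS'' : ∀ x ∈ Icc (0:ℝ) rb, deriv (deriv S) x < 0)
    (a b : ℝ) (ha : a ∈ Icc (0:ℝ) rb) (hb : b ∈ Icc (0:ℝ) rb) :
    ∃ x ∈ Icc a rb, ∃ y ∈ Icc (0:ℝ) b,
      (∀ x' ∈ Icc a rb, piMM D S x' y ≤ piMM D S x y) ∧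
      (∀ y' ∈ Icc (0:ℝ) b, piRM D S x y' ≤ piRM D S x y) := by
  obtain ⟨ha0, harb⟩ := ha
  obtain ⟨hb0, hbrb⟩ := hb
  have h0rb : (0:ℝ) ≤ rb := (hrhat.trans hrb).le
  have h0mem : (0:ℝ) ∈ Icc (0:ℝ) rb := ⟨le_rfl, h0rb⟩
  have hrbmem : rb ∈ Icc (0:ℝ) rb := ⟨h0rb, le_rfl⟩
  have hamem : a ∈ Icc (0:ℝ) rb := ⟨ha0, harb⟩
  have hbmem : b ∈ Icc (0:ℝ) rb := ⟨hb0, hbrb⟩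
  -- S is nonnegative on [0, rb]
  have hSnn : ∀ y ∈ Icc (0:ℝ) rb, 0 ≤ S y := by
    intro y hy
    rcases eq_or_lt_of_le hy.2 with h | h
    · rw [h, hSb]
    · have := hSa hy hrbmem h
      rw [hSb] at this; linarith
  -- D is monotone (non-strict) on [0, rb]
  have hDmono : ∀ ⦃u⦄, u ∈ Icc (0:ℝ) rb → ∀ ⦃v⦄, v ∈ Icc (0:ℝ) rb → u ≤ v → D u ≤ D v := by
    intro u hu v hv huv
    rcases eq_or_lt_of_le huv with rfl | h
    · exact le_rfl
    · exact (hDm hu hv h).le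
  have hanti : ∀ ⦃u⦄, u ∈ Icc (0:ℝ) rb → ∀ ⦃v⦄, v ∈ Icc (0:ℝ) rb → u ≤ v → S v ≤ S u := by
    intro u hu v hv huv
    rcases eq_or_lt_of_le huv with rfl | h
    · exact le_rfl
    · exact (hSa hu hv h).le
  -- S is concave on [0, rb]
  have hconc : ConcaveOn ℝ (Icc 0 rb) S := by
    have hsub : interior (Icc (0:ℝ) rb) ⊆ U := interior_subset.trans hU
    refine concaveOn_of_deriv2_nonpos (convex_Icc _ _) hSc
      ((hS2.differentiableOn (by norm_num)).mono hsub)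
      (((hS2.deriv_of_isOpen (m := 1) hUo (by norm_num)).differentiableOn
        (by norm_num)).mono hsub)
      (fun x hx => ?_)
    have h2 : deriv^[2] S x = deriv (deriv S) x := by
      simp [Function.iterate_succ_apply']
    rw [h2]
    exact (hS'' x (interior_subset hx)).le
  -- rm's best response to x = a
  have hSbcont : ContinuousOn S (Icc 0 b) := hSc.mono (Icc_subset_Icc le_rfl hbrb)
  have hcontR : ContinuousOn (fun y => piRM D S a y) (Icc 0 b) := by
    unfold piRM interQ
    fun_prop
  obtain ⟨ystar, hysmem, hysmax⟩ :=
    isCompact_Icc.exists_isMaxOn (nonempty_Icc.2 hb0) hcontR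
  have hysmax' : ∀ y' ∈ Icc (0:ℝ) b, piRM D S a y' ≤ piRM D S a ystar :=
    fun y' hy' => hysmax hy'
  by_cases hM : piRM D S a ystar ≤ 0
  · -- Case B : (a, 0) is an equilibrium
    refine ⟨a, ⟨le_rfl, harb⟩, 0, ⟨le_rfl, hb0⟩, ?_, ?_⟩
    · intro x' hx'
      have hx'I : x' ∈ Icc (0:ℝ) rb := ⟨le_trans ha0 hx'.1, hx'.2⟩
      by_cases hda : D a ≤ S 0
      · have h4 := aux_L4 (D := D) (S := S) (x := x') hx'I.1
        have h5 : piMM D S a 0 = 0 := by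
          unfold piMM interQ
          rw [min_eq_left hda, sub_self, max_self,
            max_eq_right (by linarith : (0:ℝ) - a ≤ 0)]
          ring
        rw [h5]; exact h4
      · push_neg at hda
        exact aux_L1 ha0 hx'.1 hda.le (hDmono hamem hx'I hx'.1) (hSnn 0 h0mem)
    · intro y' hy'
      have h6 := hysmax' y' hy'
      rw [aux_L3 ha0]
      linarith
  · push_neg at hM
    have hysI : ystar ∈ Icc (0:ℝ) rb := ⟨hysmem.1, hysmem.2.trans hbrb⟩
    have hays : a < ystar := by
      by_contra h
      push_neg at h
      exact absurd (aux_L2 h hysmem.1) (by linarith)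
    have hQpos : 0 < min (D a) (S ystar) := by
      by_contra h
      push_neg at h
      have h1 : (1 / 2 : ℝ) * max (ystar - a) 0 * min (D a) (S ystar) ≤ 0 :=
        mul_nonpos_of_nonneg_of_nonpos
          (mul_nonneg (by norm_num) (le_max_right _ _)) h
      have h2 : 0 ≤ max (S ystar - min (D a) (S ystar)) 0 * ystar :=
        mul_nonneg (le_max_right _ _) hysmem.1
      have : piRM D S a ystar ≤ 0 := by
        unfold piRM interQ; linarith
      linarith
    have hDapos : 0 < D a := lt_of_lt_of_le hQpos (min_le_left _ _)
    by_cases hc1 : S ystar ≤ D a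
    · -- Case C1 : (a, ystar) is an equilibrium
      exact ⟨a, ⟨le_rfl, harb⟩, ystar, hysmem,
        fun x' hx' => aux_L1 ha0 hx'.1 hc1
          (hDmono hamem ⟨le_trans ha0 hx'.1, hx'.2⟩ hx'.1) (hSnn _ hysI), hysmax'⟩
    · push_neg at hc1
      -- Case C2 : push the rm argmax up to a matched point or to the corner b
      have hcontS : ContinuousOn S (Icc ystar b) :=
        hSc.mono (Icc_subset_Icc hysI.1 hbrb)
      obtain ⟨w, hwmem, hwda⟩ :
          ∃ w ∈ Icc ystar b, D a ≤ S w ∧ (S w ≤ D a ∨ w = b) := by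
        by_cases hsb : D a ≤ S b
        · exact ⟨b, ⟨hysmem.2, le_rfl⟩, hsb, Or.inr rfl⟩
        · push_neg at hsb
          obtain ⟨w, hw, hws⟩ :=
            intermediate_value_Icc' hysmem.2 hcontS ⟨hsb.le, hc1.le⟩
          exact ⟨w, hw, le_of_eq hws.symm, Or.inl (le_of_eq hws)⟩
      have hwb : w ≤ b := hwmem.2
      have hwI : w ∈ Icc (0:ℝ) rb := ⟨le_trans hysmem.1 hwmem.1, hwb.trans hbrb⟩
      have haw : a ≤ w := le_trans hays.le hwmem.1
      have hform : ∀ y ∈ Icc a w, piRM D S a y =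
          (3 / 2 * D a) * y + (-(1 / 2) * a * D a) - S y * y := by
        intro y hy
        have hyI : y ∈ Icc (0:ℝ) rb := ⟨le_trans ha0 hy.1, le_trans hy.2 hwI.2⟩
        have hSyw : S w ≤ S y := hanti hyI hwI hy.2
        have hDaSy : D a ≤ S y := le_trans hwda.1 hSyw
        unfold piRM interQ
        rw [min_eq_left hDaSy, max_eq_left (by linarith [hy.1] : (0:ℝ) ≤ y - a),
          max_eq_left (by linarith : (0:ℝ) ≤ S y - D a)]
        ring
      have hysmem2 : ystar ∈ Icc a w := ⟨hays.le, hwmem.1⟩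
      have hL7 := aux_L7 (c₁ := 3 / 2 * D a) (c₀ := -(1 / 2) * a * D a)
        hconc hanti hamem hwI haw hysmem2
      rw [← hform ystar hysmem2, ← hform a ⟨le_rfl, haw⟩,
        ← hform w ⟨haw, le_rfl⟩] at hL7
      have hRaa : piRM D S a a ≤ 0 := aux_L2 le_rfl ha0
      have hwbig : piRM D S a ystar ≤ piRM D S a w := by
        rcases le_max_iff.1 hL7 with h | h
        · linarith
        · exact h
      have hwmax : ∀ y' ∈ Icc (0:ℝ) b, piRM D S a y' ≤ piRM D S a w :=
        fun y' hy' => (hysmax' y' hy').trans hwbig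
      have hwfeas : w ∈ Icc (0:ℝ) b := ⟨hwI.1, hwb⟩
      rcases hwda.2 with hmatched | hwe
      · -- matched point : (a, w) is an equilibrium
        exact ⟨a, ⟨le_rfl, harb⟩, w, hwfeas,
          fun x' hx' => aux_L1 ha0 hx'.1 hmatched
            (hDmono hamem ⟨le_trans ha0 hx'.1, hx'.2⟩ hx'.1) (hSnn _ hwI), hwmax⟩
      · -- kernel case : equilibrium (xh, b) with xh mm's (adjusted) argmax against b
        obtain rfl : b = w := hwe.symm
        have hdaSb : D a ≤ S b := hwda.1
        have hab : a < b := lt_of_lt_of_le hays hysmem.2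
        have hSbnn : 0 ≤ S b := hSnn b hbmem
        have hDacont : ContinuousOn D (Icc a rb) := hDc.mono (Icc_subset_Icc ha0 le_rfl)
        have hcontM : ContinuousOn (fun x => piMM D S x b) (Icc a rb) := by
          unfold piMM interQ
          fun_prop
        obtain ⟨z, hzmem, hzmax⟩ :=
          isCompact_Icc.exists_isMaxOn (nonempty_Icc.2 harb) hcontM
        have hzmax' : ∀ x' ∈ Icc a rb, piMM D S x' b ≤ piMM D S z b :=
          fun x' hx' => hzmax hx'
        have hzI : z ∈ Icc (0:ℝ) rb := ⟨le_trans ha0 hzmem.1, hzmem.2⟩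
        obtain ⟨xh, hxhmem, hxhle, hxhmax⟩ :
            ∃ xh ∈ Icc a rb, D xh ≤ S b ∧
              ∀ x' ∈ Icc a rb, piMM D S x' b ≤ piMM D S xh b := by
          by_cases hz1 : D z ≤ S b
          · exact ⟨z, hzmem, hz1, hzmax'⟩
          · push_neg at hz1
            have hDcont2 : ContinuousOn D (Icc a z) :=
              hDc.mono (Icc_subset_Icc ha0 hzmem.2)
            obtain ⟨xm, hxm, hxms⟩ :=
              intermediate_value_Icc hzmem.1 hDcont2 ⟨hdaSb, hz1.le⟩
            have hkey : piMM D S z b ≤ piMM D S xm b := by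
              unfold piMM interQ
              rw [min_eq_right hz1.le, hxms, min_self, sub_self, max_self,
                max_eq_left (by linarith : (0:ℝ) ≤ D z - S b)]
              have m1 : max (b - z) 0 ≤ max (b - xm) 0 :=
                max_le_max (by linarith [hxm.2]) le_rfl
              have m2 : 0 ≤ (D z - S b) * z :=
                mul_nonneg (by linarith) hzI.1
              nlinarith [mul_le_mul_of_nonneg_right m1 hSbnn]
            exact ⟨xm, ⟨hxm.1, hxm.2.trans hzmem.2⟩, le_of_eq hxms,
              fun x' hx' => (hzmax' x' hx').trans hkey⟩
        have hxhI : xh ∈ Icc (0:ℝ) rb := ⟨le_trans ha0 hxhmem.1, hxhmem.2⟩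
        have hfa : piMM D S a b = 1 / 2 * (b - a) * D a := by
          unfold piMM interQ
          rw [min_eq_left hdaSb, sub_self, max_self,
            max_eq_left (by linarith : (0:ℝ) ≤ b - a)]
          ring
        have hApos : 0 < piMM D S a b := by
          rw [hfa]
          have : (0:ℝ) < b - a := by linarith
          positivity
        have hXge : piMM D S a b ≤ piMM D S xh b := hxhmax a ⟨le_rfl, harb⟩
        have hXpos : 0 < piMM D S xh b := lt_of_lt_of_le hApos hXge
        have hxhb : xh < b := by
          by_contra h
          push_neg at h
          have h1 : piMM D S xh b ≤ 0 := by
            unfold piMM interQ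
            rw [max_eq_right (by linarith : b - xh ≤ 0)]
            have : 0 ≤ max (D xh - min (D xh) (S b)) 0 * xh :=
              mul_nonneg (le_max_right _ _) hxhI.1
            linarith
          linarith
        have hfxh : piMM D S xh b = 1 / 2 * (b - xh) * D xh := by
          unfold piMM interQ
          rw [min_eq_left hxhle, sub_self, max_self,
            max_eq_left (by linarith : (0:ℝ) ≤ b - xh)]
          ring
        have hRf : piRM D S xh b = 1 / 2 * (b - xh) * D xh - (S b - D xh) * b := by
          unfold piRM interQ
          rw [min_eq_left hxhle, max_eq_left (by linarith : (0:ℝ) ≤ b - xh),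
            max_eq_left (by linarith : (0:ℝ) ≤ S b - D xh)]
        have hRa : piRM D S a b = 1 / 2 * (b - a) * D a - (S b - D a) * b := by
          unfold piRM interQ
          rw [min_eq_left hdaSb, max_eq_left (by linarith : (0:ℝ) ≤ b - a),
            max_eq_left (by linarith : (0:ℝ) ≤ S b - D a)]
        have hDxha : D a ≤ D xh := hDmono hamem hxhI hxhmem.1
        have hgain : piRM D S a b ≤ piRM D S xh b := by
          have h6 := hXge
          rw [hfa, hfxh] at h6
          have h7 : 0 ≤ b * (D xh - D a) := mul_nonneg hb0 (by linarith)
          rw [hRf, hRa]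
          nlinarith [h6, h7]
        have hRpos : 0 < piRM D S xh b :=
          lt_of_lt_of_le (lt_of_lt_of_le hM hwbig) hgain
        refine ⟨xh, hxhmem, b, ⟨hb0, le_rfl⟩, hxhmax, ?_⟩
        intro y' hy'
        by_cases hyx : y' ≤ xh
        · exact (aux_L2 hyx hy'.1).trans hRpos.le
        · push_neg at hyx
          have hform2 : ∀ u ∈ Icc xh b, piRM D S xh u =
              (3 / 2 * D xh) * u + (-(1 / 2) * xh * D xh) - S u * u := by
            intro u hu
            have huI : u ∈ Icc (0:ℝ) rb := ⟨le_trans hxhI.1 hu.1, hu.2.trans hbrb⟩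
            have h8 : S b ≤ S u := hanti huI hbmem hu.2
            have h9 : D xh ≤ S u := hxhle.trans h8
            unfold piRM interQ
            rw [min_eq_left h9, max_eq_left (by linarith [hu.1] : (0:ℝ) ≤ u - xh),
              max_eq_left (by linarith : (0:ℝ) ≤ S u - D xh)]
            ring
          have hy'mem2 : y' ∈ Icc xh b := ⟨hyx.le, hy'.2⟩
          have hL7b := aux_L7 (c₁ := 3 / 2 * D xh) (c₀ := -(1 / 2) * xh * D xh)
            hconc hanti hxhI hbmem hxhb.le hy'mem2
          rw [← hform2 y' hy'mem2, ← hform2 xh ⟨le_rfl, hxhb.le⟩,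
            ← hform2 b ⟨hxhb.le, le_rfl⟩] at hL7b
          have h10 : piRM D S xh xh ≤ 0 := aux_L2 le_rfl hxhI.1
          rcases le_max_iff.1 hL7b with h | h
          · linarith
          · exact h
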